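/- Let λ_1,…,λ_n be pairwise distinct nonzero reals. With ρ_r and Δ_i as below (so that ρ_n = (−1)^n λ_1⋯λ_n ≠ 0), for every r = 1,…,n one has Σ_{i=1}^n (∂ρ_r/∂λ_i) / (λ_i Δ_i) = ρ_{r−1} / ρ_n. (This identity expresses that the first negative generic separable potential, obtained from the Stäckel inversion of γ(λ) = λ^{−1}, equals ρ_{r−1}/ρ_n up to sign.) -/

import Mathlib

open Finset

/-- The Viète polynomial `ρ_r(λ)`. -/
noncomputable def viete (n : ℕ) (r : ℕ) (x : Fin n → ℝ) : ℝ :=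
  (-1 : ℝ) ^ r * ∑ s ∈ Finset.powersetCard r (Finset.univ : Finset (Fin n)),
    ∏ j ∈ s, x j

/-- `Δ_i(λ) = ∏_{j≠i} (λ_i − λ_j)`. -/
noncomputable def Delta (n : ℕ) (lam : Fin n → ℝ) (i : Fin n) : ℝ :=
  ∏ j ∈ Finset.univ.erase i, (lam i - lam j)

open Polynomial in
/-- coefficient of a product of linear factors. -/
lemma coeff_prod_X_sub_C_aux {σ : Type*} [DecidableEq σ] (s : Finset σ) (f : σ → ℝ) {k : ℕ}
    (h : k ≤ s.card) :
    (∏ j ∈ s, (X - C (f j))).coeff k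
      = (-1 : ℝ) ^ (s.card - k) * ∑ t ∈ s.powersetCard (s.card - k), ∏ j ∈ t, f j := by
  have h1 : ∀ j : σ, (X - C (f j)) = X + C (-(f j)) := by
    intro j; rw [map_neg, sub_eq_add_neg]
  simp_rw [h1]
  rw [Finset.prod_X_add_C_coeff s (fun j => -(f j)) h, Finset.mul_sum]
  refine Finset.sum_congr rfl fun t ht => ?_
  have hcard : t.card = s.card - k := (Finset.mem_powersetCard.mp ht).2
  calc ∏ j ∈ t, -(f j) = ∏ j ∈ t, ((-1 : ℝ) * f j) := by simp
    _ = (-1 : ℝ) ^ t.card * ∏ j ∈ t, f j := by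
        rw [Finset.prod_mul_distrib, Finset.prod_const]
    _ = (-1 : ℝ) ^ (s.card - k) * ∏ j ∈ t, f j := by rw [hcard]

lemma delta_ne_zero (n : ℕ) (lam : Fin n → ℝ) (hlam : Function.Injective lam) (i : Fin n) :
    Delta n lam i ≠ 0 := by
  unfold Delta
  rw [Finset.prod_ne_zero_iff]
  intro j hj
  have : j ≠ i := (Finset.mem_erase.mp hj).1
  exact sub_ne_zero.mpr fun hh => this (hlam hh.symm)

open Polynomial in
/-- The key algebraic identity, proved by Lagrange interpolation of `t ↦ P(0)/t`. -/
lemma key_identity (n : ℕ) (lam : Fin n → ℝ) (hlam : Function.Injective lam)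
    (hne : ∀ i, lam i ≠ 0) (r : ℕ) (hr1 : 1 ≤ r) (hrn : r ≤ n) :
    ∑ i : Fin n,
        (∑ t ∈ (Finset.univ.erase i).powersetCard (r - 1), ∏ j ∈ t, lam j)
          / (lam i * Delta n lam i)
      = -(∑ t ∈ (Finset.univ : Finset (Fin n)).powersetCard (r - 1), ∏ j ∈ t, lam j)
          / ((-1 : ℝ) ^ n * ∏ j, lam j) := by
  have hn : 0 < n := lt_of_lt_of_le hr1 hrn
  set P : ℝ[X] := ∏ j : Fin n, (X - C (lam j)) with hP
  set P0 : ℝ := (-1 : ℝ) ^ n * ∏ j, lam j with hP0def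
  have hP0 : P.eval 0 = P0 := by
    rw [hP, eval_prod]
    simp only [eval_sub, eval_X, eval_C, zero_sub]
    calc ∏ j, -lam j = ∏ j : Fin n, ((-1 : ℝ) * lam j) := by simp
      _ = (-1 : ℝ) ^ (Finset.univ : Finset (Fin n)).card * ∏ j, lam j := by
          rw [Finset.prod_mul_distrib, Finset.prod_const]
      _ = P0 := by rw [Finset.card_univ, Fintype.card_fin]
  have hP0ne : P0 ≠ 0 := by
    rw [hP0def]
    exact mul_ne_zero (pow_ne_zero _ (by norm_num)) (Finset.prod_ne_zero_iff.mpr fun i _ => hne i)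
  set g : ℝ[X] := C P0 - P with hg
  have hg0 : g.coeff 0 = 0 := by
    rw [hg, coeff_sub, coeff_C]
    simp [coeff_zero_eq_eval_zero, hP0]
  set f : ℝ[X] := g.divX with hf
  have hfX : f * X = g := by
    have := divX_mul_X_add g
    rwa [hg0, map_zero, add_zero] at this
  have hPeval : ∀ i : Fin n, P.eval (lam i) = 0 := by
    intro i
    rw [hP, eval_prod]
    refine Finset.prod_eq_zero (Finset.mem_univ i) ?_
    simp
  have heval : ∀ i : Fin n, f.eval (lam i) = P0 / lam i := by
    intro i
    have h1 : f.eval (lam i) * lam i = g.eval (lam i) := by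
      rw [← hfX]; simp [eval_mul]
    have h2 : g.eval (lam i) = P0 := by
      rw [hg]; simp [hPeval i]
    rw [h2] at h1
    field_simp [hne i] at h1 ⊢
    linarith [h1]
  have hdegP : P.degree = n := by
    rw [hP, degree_prod]
    simp [degree_X_sub_C]
  have hdegg : g.degree ≤ n := by
    refine le_trans (degree_sub_le _ _) ?_
    rw [max_le_iff]
    exact ⟨le_trans degree_C_le (by exact_mod_cast Nat.cast_nonneg n), le_of_eq hdegP⟩
  have hdeg : f.degree < ((Finset.univ : Finset (Fin n)).card : ℕ) := by
    rw [Finset.card_univ, Fintype.card_fin]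
    by_cases hgz : g = 0
    · rw [hf, hgz, divX_zero, degree_zero]
      exact_mod_cast WithBot.bot_lt_coe n
    · exact lt_of_lt_of_le (degree_divX_lt hgz) hdegg
  have hinj : Set.InjOn lam (Finset.univ : Finset (Fin n)) := Function.Injective.injOn hlam
  have heq := Lagrange.eq_interpolate hinj hdeg
  -- take coefficient at n - r on both sides
  have hcoeff := congrArg (fun q : ℝ[X] => q.coeff (n - r)) heq
  simp only [Lagrange.interpolate_apply] at hcoeff
  -- LHS coefficient
  have hL : f.coeff (n - r)
      = -((-1 : ℝ) ^ (r - 1) *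
          ∑ t ∈ (Finset.univ : Finset (Fin n)).powersetCard (r - 1), ∏ j ∈ t, lam j) := by
    rw [hf, coeff_divX, hg, coeff_sub, coeff_C, if_neg (by omega)]
    rw [hP, coeff_prod_X_sub_C_aux (Finset.univ : Finset (Fin n)) lam
      (by rw [Finset.card_univ, Fintype.card_fin]; omega)]
    rw [Finset.card_univ, Fintype.card_fin]
    have : n - (n - r + 1) = r - 1 := by omega
    rw [this, zero_sub]
  -- basis coefficients
  have hbasis : ∀ i : Fin n, (Lagrange.basis (Finset.univ : Finset (Fin n)) lam i).coeff (n - r)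
      = (Delta n lam i)⁻¹ * ((-1 : ℝ) ^ (r - 1) *
          ∑ t ∈ (Finset.univ.erase i).powersetCard (r - 1), ∏ j ∈ t, lam j) := by
    intro i
    have hcarde : (Finset.univ.erase i).card = n - 1 := by
      rw [Finset.card_erase_of_mem (Finset.mem_univ i), Finset.card_univ, Fintype.card_fin]
    rw [Lagrange.basis]
    simp_rw [Lagrange.basisDivisor]
    rw [Finset.prod_mul_distrib, ← map_prod, Finset.prod_inv_distrib]
    rw [coeff_C_mul]
    rw [coeff_prod_X_sub_C_aux (Finset.univ.erase i) lam (by rw [hcarde]; omega)]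
    rw [hcarde]
    have h2 : n - 1 - (n - r) = r - 1 := by omega
    rw [h2, Delta]
  rw [hL] at hcoeff
  simp only [finset_sum_coeff, coeff_C_mul] at hcoeff
  simp_rw [hbasis, heval] at hcoeff
  -- now massage
  have hc : ((-1 : ℝ) ^ (r - 1)) ≠ 0 := pow_ne_zero _ (by norm_num)
  have hstep : ∑ i : Fin n,
        (∑ t ∈ (Finset.univ.erase i).powersetCard (r - 1), ∏ j ∈ t, lam j)
          / (lam i * Delta n lam i)
      = (∑ i : Fin n, P0 / lam i * ((Delta n lam i)⁻¹ * ((-1 : ℝ) ^ (r - 1) *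
          ∑ t ∈ (Finset.univ.erase i).powersetCard (r - 1), ∏ j ∈ t, lam j)))
        / ((-1 : ℝ) ^ (r - 1) * P0) := by
    rw [Finset.sum_div]
    refine Finset.sum_congr rfl fun i _ => ?_
    field_simp [hne i, delta_ne_zero n lam hlam i, hP0ne]
  rw [hstep, ← hcoeff, neg_div, neg_div, neg_inj,
    mul_div_mul_left _ _ hc]

lemma fderiv_viete (n r : ℕ) (hr1 : 1 ≤ r) (lam : Fin n → ℝ) (i : Fin n) :
    fderiv ℝ (viete n r) lam (Pi.single i 1)
      = (-1 : ℝ) ^ r *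
          ∑ t ∈ (Finset.univ.erase i).powersetCard (r - 1), ∏ j ∈ t, lam j := by
  have H : HasFDerivAt (viete n r)
      ((-1 : ℝ) ^ r • ∑ s ∈ Finset.powersetCard r (Finset.univ : Finset (Fin n)),
        ∑ j ∈ s, (∏ k ∈ s.erase j, lam k) • (ContinuousLinearMap.proj j :
          (Fin n → ℝ) →L[ℝ] ℝ)) lam := by
    have h1 : HasFDerivAt
        (fun x : Fin n → ℝ => ∑ s ∈ Finset.powersetCard r (Finset.univ : Finset (Fin n)),
          ∏ j ∈ s, x j)
        (∑ s ∈ Finset.powersetCard r (Finset.univ : Finset (Fin n)),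
          ∑ j ∈ s, (∏ k ∈ s.erase j, lam k) • (ContinuousLinearMap.proj j :
            (Fin n → ℝ) →L[ℝ] ℝ)) lam :=
      HasFDerivAt.fun_sum fun s _ => hasFDerivAt_finset_prod
    exact h1.const_smul ((-1 : ℝ) ^ r)
  rw [H.fderiv]
  simp only [ContinuousLinearMap.smul_apply, ContinuousLinearMap.coe_sum', Finset.sum_apply,
    ContinuousLinearMap.coe_smul', Pi.smul_apply, ContinuousLinearMap.proj_apply,
    smul_eq_mul]
  congr 1
  have hterm : ∀ s ∈ Finset.powersetCard r (Finset.univ : Finset (Fin n)),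
      ∑ j ∈ s, (∏ k ∈ s.erase j, lam k) * (Pi.single i 1 : Fin n → ℝ) j
        = if i ∈ s then ∏ k ∈ s.erase i, lam k else 0 := by
    intro s _
    rw [← Finset.sum_ite_eq' s i (fun j => ∏ k ∈ s.erase j, lam k)]
    refine Finset.sum_congr rfl fun j _ => ?_
    by_cases hji : j = i
    · subst hji; simp
    · simp [Pi.single_apply, hji]
  rw [Finset.sum_congr rfl hterm, ← Finset.sum_filter]
  refine Finset.sum_bij' (fun s _ => s.erase i) (fun t _ => insert i t) ?_ ?_ ?_ ?_ ?_
  · intro s hs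
    rw [Finset.mem_filter, Finset.mem_powersetCard] at hs
    obtain ⟨⟨hsub, hcard⟩, hi⟩ := hs
    rw [Finset.mem_powersetCard]
    constructor
    · exact Finset.erase_subset_erase i hsub
    · rw [Finset.card_erase_of_mem hi, hcard]
  · intro t ht
    rw [Finset.mem_powersetCard] at ht
    obtain ⟨hsub, hcard⟩ := ht
    have hit : i ∉ t := fun h => (Finset.mem_erase.mp (hsub h)).1 rfl
    rw [Finset.mem_filter, Finset.mem_powersetCard]
    refine ⟨⟨Finset.subset_univ _, ?_⟩, Finset.mem_insert_self i t⟩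
    rw [Finset.card_insert_of_notMem hit, hcard]
    omega
  · intro s hs
    rw [Finset.mem_filter] at hs
    exact Finset.insert_erase hs.2
  · intro t ht
    rw [Finset.mem_powersetCard] at ht
    have hit : i ∉ t := fun h => (Finset.mem_erase.mp (ht.1 h)).1 rfl
    exact Finset.erase_insert hit
  · intro s hs
    rfl

theorem stmt8 (n : ℕ) (lam : Fin n → ℝ) (hlam : Function.Injective lam)
    (hne : ∀ i, lam i ≠ 0) :
    ∀ r ∈ Finset.Icc 1 n,
      ∑ i : Fin n,
        fderiv ℝ (viete n r) lam (Pi.single i 1) / (lam i * Delta n lam i)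
        = viete n (r - 1) lam / viete n n lam := by
  intro r hr
  rw [Finset.mem_Icc] at hr
  obtain ⟨hr1, hrn⟩ := hr
  have hvn : viete n n lam = (-1 : ℝ) ^ n * ∏ j, lam j := by
    have hps : Finset.powersetCard n (Finset.univ : Finset (Fin n)) = {Finset.univ} := by
      ext s
      rw [Finset.mem_powersetCard, Finset.mem_singleton]
      constructor
      · rintro ⟨-, hc⟩
        apply Finset.eq_univ_of_card
        rw [hc, Fintype.card_fin]
      · rintro rfl
        exact ⟨Finset.Subset.refl _, by rw [Finset.card_univ, Fintype.card_fin]⟩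
    rw [viete, hps, Finset.sum_singleton]
  simp_rw [fderiv_viete n r hr1 lam, mul_div_assoc]
  rw [← Finset.mul_sum, key_identity n lam hlam hne r hr1 hrn, hvn, viete]
  rw [← mul_div_assoc]
  congr 1
  obtain ⟨m, rfl⟩ : ∃ m, r = m + 1 := ⟨r - 1, by omega⟩
  simp only [Nat.add_sub_cancel]
  rw [pow_succ]
  ring
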